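/- If σ is a simple permutation and both 3142 and 263514 are simple patterns, then for any nonempty permutations ρ⁽¹⁾,…,ρ⁽ⁿ⁾: the inflation σ[ρ⁽¹⁾,…,ρ⁽ⁿ⁾] contains 3142 (respectively 263514) if and only if σ contains 3142 (respectively 263514) or some ρ⁽ⁱ⁾ contains it. In particular, if σ and all ρ⁽ⁱ⁾ avoid 3142 and 263514, so does the inflation. -/

import Mathlib

/-- A pattern `τ` (a word on `Fin k`) occurs in the permutation `π` of length `n`. -/
def Contains {k n : ℕ} (τ : Fin k → Fin k) (π : Equiv.Perm (Fin n)) : Prop :=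
  ∃ f : Fin k → Fin n, StrictMono f ∧ ∀ i j : Fin k, τ i < τ j ↔ π (f i) < π (f j)

/-- The permutation `π` avoids the pattern `τ`. -/
def Avoids {k n : ℕ} (τ : Fin k → Fin k) (π : Equiv.Perm (Fin n)) : Prop :=
  ¬ Contains τ π

def pat132 : Fin 3 → Fin 3 := ![0, 2, 1]
def pat2143 : Fin 4 → Fin 4 := ![1, 0, 3, 2]
def pat3142 : Fin 4 → Fin 4 := ![2, 0, 3, 1]
def pat4132 : Fin 4 → Fin 4 := ![3, 0, 2, 1]
def pat2413 : Fin 4 → Fin 4 := ![1, 3, 0, 2]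
def pat263514 : Fin 6 → Fin 6 := ![1, 5, 2, 4, 0, 3]

/-- `i` is a left-to-right maximum of `π`. -/
def IsLRMax {n : ℕ} (π : Equiv.Perm (Fin n)) (i : Fin n) : Prop :=
  ∀ j, j < i → π j < π i

/-- `i` is a leading maximum of `π`: all positions up to `i` are LR-maxima. -/
def IsLeadingMax {n : ℕ} (π : Equiv.Perm (Fin n)) (i : Fin n) : Prop :=
  ∀ j, j ≤ i → IsLRMax π j

/-- `ℓ(π)`, the number of leading maxima of `π`. -/
noncomputable def numLeading {n : ℕ} (π : Equiv.Perm (Fin n)) : ℕ :=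
  Set.ncard {i : Fin n | IsLeadingMax π i}

/-- The set of values of `π` on the positions in `[i, j]` is an interval of values. -/
def IsIntervalAt {n : ℕ} (π : Equiv.Perm (Fin n)) (i j : Fin n) : Prop :=
  ∃ a b : Fin n, (fun x => π x) '' Set.Icc i j = Set.Icc a b

/-- A permutation is simple if its only intervals are the singletons and the whole thing. -/
def IsSimple {n : ℕ} (π : Equiv.Perm (Fin n)) : Prop :=
  ∀ i j : Fin n, i ≤ j → IsIntervalAt π i j → i = j ∨ ((i : ℕ) = 0 ∧ (j : ℕ) = n - 1)

/-- A pattern `τ` occurs in the word `w`. -/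
def ContainsL {k : ℕ} (τ : Fin k → Fin k) (w : List ℕ) : Prop :=
  ∃ f : Fin k → Fin w.length, StrictMono f ∧
    ∀ i j : Fin k, τ i < τ j ↔ w.get (f i) < w.get (f j)

def AvoidsL {k : ℕ} (τ : Fin k → Fin k) (w : List ℕ) : Prop := ¬ ContainsL τ w

/-- The word of a permutation. -/
def toWord {n : ℕ} (π : Equiv.Perm (Fin n)) : List ℕ := List.ofFn fun p => (π p : ℕ)

/-- Total size of the values consumed by blocks whose image under `σ` is below `σ i`. -/
def valOffset {n : ℕ} (σ : Equiv.Perm (Fin n)) (m : Fin n → ℕ) (i : Fin n) : ℕ :=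
  ∑ i' ∈ Finset.univ.filter (fun i' => σ i' < σ i), m i'

/-- The inflation `σ[ρ 0, …, ρ (n-1)]`, as a word: each entry `σ i` is replaced by a
block order-isomorphic to `ρ i`, blocks being arranged relative to each other as in `σ`. -/
def inflation {n : ℕ} (σ : Equiv.Perm (Fin n)) (m : Fin n → ℕ)
    (ρ : ∀ i, Equiv.Perm (Fin (m i))) : List ℕ :=
  (List.ofFn fun i : Fin n =>
    List.ofFn fun r : Fin (m i) => valOffset σ m i + (ρ i r : ℕ)).flatten


namespace Stmt13Aux

theorem flatten_pos_lt {α : Type*} : ∀ (l : List (List α)) (j : ℕ) (hj : j < l.length) (r : ℕ),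
    r < (l[j]).length → ((l.take j).map List.length).sum + r < l.flatten.length
  | a :: l, 0, _, r, hr => by
      simp only [List.take_zero, List.map_nil, List.sum_nil, Nat.zero_add, List.flatten_cons,
        List.length_append]
      simp only [List.getElem_cons_zero] at hr
      omega
  | a :: l, j + 1, hj, r, hr => by
      have := flatten_pos_lt l j (by simpa using hj) r (by simpa using hr)
      simp only [List.take_succ_cons, List.map_cons, List.sum_cons, List.flatten_cons,
        List.length_append]
      omega

theorem flatten_getElem {α : Type*} : ∀ (l : List (List α)) (j : ℕ) (hj : j < l.length) (r : ℕ)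
    (hr : r < (l[j]).length) (hp : ((l.take j).map List.length).sum + r < l.flatten.length),
    l.flatten[((l.take j).map List.length).sum + r] = l[j][r]
  | a :: l, 0, _, r, hr, hp => by
      simp only [List.getElem_cons_zero] at hr ⊢
      simp only [List.take_zero, List.map_nil, List.sum_nil, Nat.zero_add, List.flatten_cons] at hp ⊢
      exact List.getElem_append_left hr
  | a :: l, j + 1, hj, r, hr, hp => by
      simp only [List.getElem_cons_succ] at hr ⊢
      simp only [List.take_succ_cons, List.map_cons, List.sum_cons, List.flatten_cons] at hp ⊢
      have h1 : a.length ≤ a.length + ((l.take j).map List.length).sum + r := by omega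
      rw [List.getElem_append_right h1]
      have h2 : a.length + ((l.take j).map List.length).sum + r - a.length
          = ((l.take j).map List.length).sum + r := by omega
      simp only [h2]
      exact flatten_getElem l j (by simpa using hj) r hr _

theorem flatten_decomp {α : Type*} : ∀ (l : List (List α)) (p : ℕ), p < l.flatten.length →
    ∃ j, ∃ hj : j < l.length, ∃ r, ∃ _ : r < (l[j]).length,
      p = ((l.take j).map List.length).sum + r
  | [], p, hp => by simp at hp
  | a :: l, p, hp => by
      by_cases h : p < a.length
      · exact ⟨0, by simp, p, by simpa using h, by simp⟩
      · simp only [List.flatten_cons, List.length_append] at hp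
        obtain ⟨j, hj, r, hr, hpr⟩ := flatten_decomp l (p - a.length) (by omega)
        refine ⟨j + 1, by simpa using hj, r, by simpa using hr, ?_⟩
        simp only [List.take_succ_cons, List.map_cons, List.sum_cons]
        omega



section Infl

variable {n : ℕ} (σ : Equiv.Perm (Fin n)) (m : Fin n → ℕ) (ρ : ∀ i, Equiv.Perm (Fin (m i)))

/-- The list of blocks. -/
def LL : List (List ℕ) :=
  List.ofFn fun i : Fin n => List.ofFn fun r : Fin (m i) => valOffset σ m i + (ρ i r : ℕ)

theorem inflation_eq : inflation σ m ρ = (LL σ m ρ).flatten := rfl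

theorem LL_length : (LL σ m ρ).length = n := List.length_ofFn

theorem LL_get (i : Fin n) (h : (i : ℕ) < (LL σ m ρ).length) :
    (LL σ m ρ)[(i : ℕ)] = List.ofFn fun r : Fin (m i) => valOffset σ m i + (ρ i r : ℕ) := by
  simp [LL]

theorem LL_get_length (i : Fin n) (h : (i : ℕ) < (LL σ m ρ).length) :
    ((LL σ m ρ)[(i : ℕ)]).length = m i := by
  rw [LL_get]; exact List.length_ofFn

/-- Positional offset of block `j`. -/
def pof (j : ℕ) : ℕ := (((LL σ m ρ).take j).map List.length).sum

theorem pof_succ (j : ℕ) (hj : j < n) :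
    pof σ m ρ (j + 1) = pof σ m ρ j + m ⟨j, hj⟩ := by
  have hj' : j < ((LL σ m ρ).map List.length).length := by
    simp [LL_length]; exact hj
  have := List.sum_take_succ ((LL σ m ρ).map List.length) j hj'
  simp only [pof, List.map_take]
  rw [this]
  congr 1
  rw [List.getElem_map]
  exact LL_get_length σ m ρ ⟨j, hj⟩ (by rw [LL_length]; exact hj)

theorem pof_mono {i j : ℕ} (hij : i ≤ j) (hj : j ≤ n) : pof σ m ρ i ≤ pof σ m ρ j := by
  induction j with
  | zero => have : i = 0 := by omega
            subst this; exact le_refl _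
  | succ j ih =>
    rcases Nat.lt_or_ge i (j + 1) with h | h
    · have : pof σ m ρ i ≤ pof σ m ρ j := ih (by omega) (by omega)
      rw [pof_succ σ m ρ j (by omega)]
      omega
    · have : i = j + 1 := by omega
      subst this; exact le_refl _

theorem pos_lt {i i' : Fin n} (h : i < i') {r r' : ℕ} (hr : r < m i) :
    pof σ m ρ i + r < pof σ m ρ i' + r' := by
  have h1 : pof σ m ρ ((i : ℕ) + 1) = pof σ m ρ i + m i := by
    rw [pof_succ σ m ρ i i.isLt]
  have h2 : pof σ m ρ ((i : ℕ) + 1) ≤ pof σ m ρ i' := pof_mono σ m ρ (by omega) i'.isLt.le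
  omega

theorem pos_le_blk {i i' : Fin n} {r r' : ℕ} (hr : r < m i) (hr' : r' < m i')
    (h : pof σ m ρ i + r ≤ pof σ m ρ i' + r') : i ≤ i' := by
  by_contra hc
  push_neg at hc
  exact absurd h (by push_neg; exact pos_lt σ m ρ hc hr')

theorem vofs_le {i i' : Fin n} (h : σ i < σ i') :
    valOffset σ m i + m i ≤ valOffset σ m i' := by
  have hnot : i ∉ Finset.univ.filter fun i'' => σ i'' < σ i := by simp
  have hsub : insert i (Finset.univ.filter fun i'' => σ i'' < σ i)
      ⊆ Finset.univ.filter fun i'' => σ i'' < σ i' := by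
    intro x hx
    simp only [Finset.mem_insert, Finset.mem_filter, Finset.mem_univ, true_and] at hx ⊢
    rcases hx with rfl | hx
    · exact h
    · exact hx.trans h
  calc valOffset σ m i + m i
      = ∑ x ∈ insert i (Finset.univ.filter fun i'' => σ i'' < σ i), m x := by
        rw [Finset.sum_insert hnot, valOffset]; ring
    _ ≤ valOffset σ m i' := Finset.sum_le_sum_of_subset hsub

theorem val_lt {i i' : Fin n} (h : σ i < σ i') {x y : ℕ} (hx : x < m i) :
    valOffset σ m i + x < valOffset σ m i' + y := by
  have := vofs_le σ m h
  omega

theorem val_lt_iff {i i' : Fin n} (hne : i ≠ i') {x y : ℕ} (hx : x < m i) (hy : y < m i') :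
    valOffset σ m i + x < valOffset σ m i' + y ↔ σ i < σ i' := by
  constructor
  · intro hlt
    rcases lt_trichotomy (σ i) (σ i') with h | h | h
    · exact h
    · exact absurd (σ.injective h) hne
    · exact absurd hlt (by push_neg; exact (val_lt σ m h hy).le)
  · intro h; exact val_lt σ m h hx

theorem w_get (i : Fin n) (r : ℕ) (hr : r < m i) :
    ∃ hp : pof σ m ρ i + r < (inflation σ m ρ).length,
      (inflation σ m ρ).get ⟨pof σ m ρ i + r, hp⟩ = valOffset σ m i + (ρ i ⟨r, hr⟩ : ℕ) := by
  have hj : (i : ℕ) < (LL σ m ρ).length := by rw [LL_length]; exact i.isLt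
  have hr' : r < ((LL σ m ρ)[(i : ℕ)]).length := by rw [LL_get_length σ m ρ i hj]; exact hr
  have hp : pof σ m ρ i + r < (inflation σ m ρ).length := by
    rw [inflation_eq]; exact flatten_pos_lt (LL σ m ρ) i hj r hr'
  refine ⟨hp, ?_⟩
  have h1 : (inflation σ m ρ).get ⟨pof σ m ρ i + r, hp⟩
      = ((LL σ m ρ)[(i : ℕ)])[r] := by
    rw [List.get_eq_getElem]
    exact flatten_getElem (LL σ m ρ) i hj r hr' _
  rw [h1]
  simp only [LL_get σ m ρ i hj]
  rw [List.getElem_ofFn]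

theorem w_decomp (p : Fin (inflation σ m ρ).length) :
    ∃ (i : Fin n) (r : ℕ) (hr : r < m i), (p : ℕ) = pof σ m ρ i + r := by
  obtain ⟨j, hj, r, hr, hpr⟩ := flatten_decomp (LL σ m ρ) p (by rw [← inflation_eq]; exact p.isLt)
  have hj' : j < n := by rwa [LL_length] at hj
  refine ⟨⟨j, hj'⟩, r, ?_, hpr⟩
  rw [← LL_get_length σ m ρ ⟨j, hj'⟩ hj]
  exact hr

theorem val_cast {i i' : Fin n} (h : i = i') {r : ℕ} (hri : r < m i) (hri' : r < m i') :
    valOffset σ m i + (ρ i ⟨r, hri⟩ : ℕ) = valOffset σ m i' + (ρ i' ⟨r, hri'⟩ : ℕ) := by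
  subst h; rfl

theorem rho_cast {i i' : Fin n} (h : i = i') {r : ℕ} (hri : r < m i) (hri' : r < m i') :
    (ρ i ⟨r, hri⟩ : ℕ) = (ρ i' ⟨r, hri'⟩ : ℕ) := by subst h; rfl

end Infl

/-- The combinatorial property of a simple pattern that we need. -/
def PatOK {k : ℕ} (τ : Fin k → Fin k) : Prop :=
  Function.Injective τ ∧
  ∀ a b : Fin k, a ≤ b →
    (∀ t, (t < a ∨ b < t) →
      (∀ s, a ≤ s → s ≤ b → τ t < τ s) ∨ (∀ s, a ≤ s → s ≤ b → τ s < τ t)) →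
    a = b ∨ ((a : ℕ) = 0 ∧ (b : ℕ) = k - 1)

theorem patOK_3142 : PatOK pat3142 := ⟨by decide, by decide⟩

theorem patOK_263514 : PatOK pat263514 := ⟨by decide, by decide⟩

theorem key {n k : ℕ} (hk : 0 < k) (σ : Equiv.Perm (Fin n)) (m : Fin n → ℕ)
    (hm : ∀ i, 0 < m i) (ρ : ∀ i, Equiv.Perm (Fin (m i))) (τ : Fin k → Fin k) (hτ : PatOK τ) :
    ContainsL τ (inflation σ m ρ) ↔ Contains τ σ ∨ ∃ i, Contains τ (ρ i) := by
  obtain ⟨hinj, hsimp⟩ := hτ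
  constructor
  · rintro ⟨f, hfmono, hfpat⟩
    have H : ∀ s : Fin k, ∃ (i : Fin n) (r : ℕ) (hr : r < m i),
        (f s : ℕ) = pof σ m ρ i + r ∧
        (inflation σ m ρ).get (f s) = valOffset σ m i + (ρ i ⟨r, hr⟩ : ℕ) := by
      intro s
      obtain ⟨i, r, hr, hp⟩ := w_decomp σ m ρ (f s)
      obtain ⟨hlt, hvl⟩ := w_get σ m ρ i r hr
      refine ⟨i, r, hr, hp, ?_⟩
      have he : f s = ⟨pof σ m ρ i + r, hlt⟩ := Fin.ext hp
      rw [he]; exact hvl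
    choose b r hr hpos hval using H
    have hbmono : Monotone b := by
      intro s t hst
      rcases eq_or_lt_of_le hst with rfl | hst
      · exact le_refl _
      · have h1 : (f s : ℕ) < (f t : ℕ) := hfmono hst
        rw [hpos s, hpos t] at h1
        exact pos_le_blk σ m ρ (hr s) (hr t) h1.le
    have hrmono : ∀ s t : Fin k, s < t → b s = b t → r s < r t := by
      intro s t hst hbe
      have h1 : (f s : ℕ) < (f t : ℕ) := hfmono hst
      rw [hpos s, hpos t, hbe] at h1
      omega
    by_cases hconst : ∀ s t : Fin k, b s = b t
    · right
      obtain ⟨i0, hi0⟩ : ∃ i0, ∀ s, b s = i0 := ⟨b ⟨0, hk⟩, fun s => hconst s _⟩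
      have hri0 : ∀ s, r s < m i0 := fun s => by rw [← hi0 s]; exact hr s
      have hgv : ∀ (s : Fin k),
          (inflation σ m ρ).get (f s) = valOffset σ m i0 + (ρ i0 ⟨r s, hri0 s⟩ : ℕ) := by
        intro s
        rw [hval s]
        exact val_cast σ m ρ (hi0 s) (hr s) (hri0 s)
      refine ⟨i0, fun s => ⟨r s, hri0 s⟩, ?_, ?_⟩
      · intro s t hst
        exact Fin.mk_lt_mk.mpr (hrmono s t hst (hconst s t))
      · intro i j
        beta_reduce
        rw [hfpat i j, hgv i, hgv j, Fin.lt_def]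
        constructor <;> intro h <;> omega
    · left
      have claim : ∀ s t : Fin k, s < t → b s ≠ b t := by
        intro s t hst hbe
        set c := b s with hc
        set P : Finset (Fin k) := Finset.univ.filter (fun u => b u = c) with hP
        have hsP : s ∈ P := by simp [P, c]
        have htP : t ∈ P := by simp [P, ← hbe]
        have hPne : P.Nonempty := ⟨s, hsP⟩
        set A := P.min' hPne with hA'
        set B := P.max' hPne with hB'
        have hAB : A ≤ B := P.min'_le B (P.max'_mem hPne)
        have hA : b A = c := by
          have := P.min'_mem hPne; simp only [P, Finset.mem_filter] at this; exact this.2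
        have hB : b B = c := by
          have := P.max'_mem hPne; simp only [P, Finset.mem_filter] at this; exact this.2
        have hmid : ∀ u, A ≤ u → u ≤ B → b u = c := by
          intro u h1 h2
          have e1 : c ≤ b u := hA ▸ hbmono h1
          have e2 : b u ≤ c := hB ▸ hbmono h2
          exact le_antisymm e2 e1
        have hout : ∀ u, u < A ∨ B < u → b u ≠ c := by
          intro u hu hbu
          have huP : u ∈ P := by simp only [P, Finset.mem_filter]; exact ⟨Finset.mem_univ _, hbu⟩
          rcases hu with h | h
          · exact absurd (P.min'_le u huP) (not_le.mpr h)
          · exact absurd (P.le_max' u huP) (not_le.mpr h)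
        have hcond : ∀ u, (u < A ∨ B < u) →
            (∀ v, A ≤ v → v ≤ B → τ u < τ v) ∨ (∀ v, A ≤ v → v ≤ B → τ v < τ u) := by
          intro u hu
          have hne := hout u hu
          rcases lt_trichotomy (σ (b u)) (σ c) with h | h | h
          · left; intro v h1 h2
            rw [hfpat, hval u, hval v]
            exact val_lt σ m (by rw [hmid v h1 h2]; exact h) (Fin.is_lt _)
          · exact absurd (σ.injective h) hne
          · right; intro v h1 h2
            rw [hfpat, hval u, hval v]
            exact val_lt σ m (by rw [hmid v h1 h2]; exact h) (Fin.is_lt _)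
        rcases hsimp A B hAB hcond with h | ⟨h0, hlast⟩
        · have h1 : A ≤ s := P.min'_le s hsP
          have h2 : t ≤ B := P.le_max' t htP
          rw [← h] at h2
          exact absurd hst (not_lt.mpr (h2.trans h1))
        · have hall : ∀ u : Fin k, b u = c := by
            intro u
            refine hmid u ?_ ?_
            · rw [Fin.le_def, h0]; omega
            · rw [Fin.le_def, hlast]; omega
          exact hconst (fun s' t' => by rw [hall s', hall t'])
      have hbinj : Function.Injective b := by
        intro s t hbe
        by_contra hne
        rcases lt_or_gt_of_ne hne with h | h
        · exact claim s t h hbe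
        · exact claim t s h hbe.symm
      refine ⟨b, hbmono.strictMono_of_injective hbinj, ?_⟩
      intro i j
      rw [hfpat i j, hval i, hval j]
      rcases eq_or_ne i j with rfl | hne
      · simp
      · exact val_lt_iff σ m (fun h => hne (hbinj h)) (Fin.is_lt _) (Fin.is_lt _)
  · rintro (⟨g, hg, hgp⟩ | ⟨i0, g, hg, hgp⟩)
    · refine ⟨fun s => ⟨pof σ m ρ (g s) + 0, (w_get σ m ρ (g s) 0 (hm _)).1⟩, ?_, ?_⟩
      · intro s t hst
        exact Fin.mk_lt_mk.mpr (pos_lt σ m ρ (hg hst) (hm _))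
      · intro i j
        rw [hgp i j]
        rw [(w_get σ m ρ (g i) 0 (hm _)).2, (w_get σ m ρ (g j) 0 (hm _)).2]
        rcases eq_or_ne i j with rfl | hne
        · simp
        · exact (val_lt_iff σ m (fun h => hne (hg.injective h)) (Fin.is_lt _) (Fin.is_lt _)).symm
    · refine ⟨fun s => ⟨pof σ m ρ i0 + (g s : ℕ), (w_get σ m ρ i0 (g s) (g s).isLt).1⟩, ?_, ?_⟩
      · intro s t hst
        have h2 : (g s : ℕ) < g t := hg hst
        exact Fin.mk_lt_mk.mpr (by omega)
      · intro i j
        rw [hgp i j]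
        have hvi := (w_get σ m ρ i0 (g i) (g i).isLt).2
        have hvj := (w_get σ m ρ i0 (g j) (g j).isLt).2
        simp only [Fin.eta] at hvi hvj
        rw [hvi, hvj, Fin.lt_def]
        constructor <;> intro h <;> omega

end Stmt13Aux

theorem stmt13 {n : ℕ} (σ : Equiv.Perm (Fin n)) (hsimple : IsSimple σ)
    (m : Fin n → ℕ) (hm : ∀ i, 0 < m i) (ρ : ∀ i, Equiv.Perm (Fin (m i))) :
    (ContainsL pat3142 (inflation σ m ρ) ↔
      Contains pat3142 σ ∨ ∃ i, Contains pat3142 (ρ i)) ∧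
    (ContainsL pat263514 (inflation σ m ρ) ↔
      Contains pat263514 σ ∨ ∃ i, Contains pat263514 (ρ i)) ∧
    ((Avoids pat3142 σ ∧ Avoids pat263514 σ ∧
        ∀ i, Avoids pat3142 (ρ i) ∧ Avoids pat263514 (ρ i)) →
      AvoidsL pat3142 (inflation σ m ρ) ∧ AvoidsL pat263514 (inflation σ m ρ)) := by
  have k1 := Stmt13Aux.key (by norm_num) σ m hm ρ pat3142 Stmt13Aux.patOK_3142
  have k2 := Stmt13Aux.key (by norm_num) σ m hm ρ pat263514 Stmt13Aux.patOK_263514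
  refine ⟨k1, k2, ?_⟩
  rintro ⟨h1, h2, h3⟩
  constructor
  · intro hc
    rcases k1.mp hc with h | ⟨i, h⟩
    · exact h1 h
    · exact (h3 i).1 h
  · intro hc
    rcases k2.mp hc with h | ⟨i, h⟩
    · exact h2 h
    · exact (h3 i).2 h
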